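/- Stabilization: with 𝒞_k defined by 𝒞_0(z) = 𝔠(z) and 𝒞_{k+1}(z) = [(𝔠(z) + y_k/z)𝒞_k(z)]_+, one has 𝒞_k(0)(y_0,...,y_{k−1}) = 𝒞_{k+1}(0)(y_0,...,y_{k−1}, y_k = 0) for all k ≥ 0; i.e., the constant term of 𝒞_{k+1} in z, with its last variable set to zero, recovers the constant term of 𝒞_k. -/

import Mathlib

/-- The nonnegative-degree part of z⁻¹·f: `plusDiv f = [f/z]_+`. -/
noncomputable def plusDiv {A : Type*} [CommRing A] (f : PowerSeries A) : PowerSeries A :=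
  PowerSeries.mk fun n => PowerSeries.coeff (R := A) (n + 1) f

/-- Stabilization: with 𝒞₀(z) = 𝔠(z) and 𝒞_{k+1}(z) = [(𝔠(z) + y_k/z)𝒞_k(z)]_+,
the constant term (in z) of 𝒞_{k+1}, with its last variable y_k set to zero,
recovers the constant term of 𝒞_k. -/
theorem generating_function_stabilization
    (c : PowerSeries (MvPolynomial ℕ ℚ))
    (hceq : PowerSeries.X * c ^ 2 + c - 1 = 0)
    (hc0 : PowerSeries.constantCoeff (R := MvPolynomial ℕ ℚ) c = 1)
    (C : ℕ → PowerSeries (MvPolynomial ℕ ℚ))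
    (hC0 : C 0 = c)
    (hrec : ∀ k : ℕ, C (k + 1) =
      c * C k + PowerSeries.C (R := MvPolynomial ℕ ℚ) (MvPolynomial.X k) * plusDiv (C k))
    (k : ℕ) :
    MvPolynomial.aeval
        (fun n : ℕ => if n = k then 0 else (MvPolynomial.X n : MvPolynomial ℕ ℚ))
        (PowerSeries.constantCoeff (R := MvPolynomial ℕ ℚ) (C (k + 1))) =
      PowerSeries.constantCoeff (R := MvPolynomial ℕ ℚ) (C k) := by
  classical
  set A : ℕ → Subalgebra ℚ (MvPolynomial ℕ ℚ) :=
    fun k => Algebra.adjoin ℚ (MvPolynomial.X '' Set.Iio k) with hA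
  have hmono : ∀ {i j : ℕ}, i ≤ j → A i ≤ A j := fun h =>
    Algebra.adjoin_mono (Set.image_mono (fun x hx => lt_of_lt_of_le hx h))
  -- all coefficients of c lie in A 0
  have hc : ∀ n, PowerSeries.coeff n c ∈ A 0 := by
    intro n
    induction n using Nat.strong_induction_on with
    | _ n ih =>
      match n with
      | 0 =>
        rw [PowerSeries.coeff_zero_eq_constantCoeff, hc0]
        exact one_mem _
      | Nat.succ n =>
        have h := congrArg (PowerSeries.coeff (R := MvPolynomial ℕ ℚ) (n + 1)) hceq
        simp only [map_add, map_sub, PowerSeries.coeff_succ_X_mul, map_zero,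
          PowerSeries.coeff_one, Nat.succ_ne_zero, if_neg (Nat.succ_ne_zero n), if_false] at h
        have heq : PowerSeries.coeff (n + 1) c =
            - PowerSeries.coeff n (c ^ 2) := by linear_combination h
        rw [heq, sq, PowerSeries.coeff_mul]
        refine neg_mem (sum_mem (fun p hp => ?_))
        rw [Finset.HasAntidiagonal.mem_antidiagonal] at hp
        exact mul_mem (ih p.1 (by omega)) (ih p.2 (by omega))
  -- coefficients of C k lie in A k
  have hCk : ∀ k n, PowerSeries.coeff n (C k) ∈ A k := by
    intro k
    induction k with
    | zero => intro n; rw [hC0]; exact hc n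
    | succ k ih =>
      intro n
      rw [hrec k, map_add, PowerSeries.coeff_mul, PowerSeries.coeff_C_mul]
      refine add_mem (sum_mem (fun p _ => ?_)) (mul_mem ?_ ?_)
      · exact mul_mem (hmono (Nat.zero_le _) (hc p.1))
          (hmono (Nat.le_succ k) (ih p.2))
      · exact Algebra.subset_adjoin ⟨k, by simp, rfl⟩
      · simpa [plusDiv] using hmono (Nat.le_succ k) (ih (n + 1))
  -- the substitution fixes A k
  set σ : ℕ → MvPolynomial ℕ ℚ :=
    fun n => if n = k then 0 else MvPolynomial.X n with hσ
  have hfix : ∀ p ∈ A k, MvPolynomial.aeval σ p = p := by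
    intro p hp
    induction hp using Algebra.adjoin_induction with
    | mem x hx =>
      obtain ⟨i, hi, rfl⟩ := hx
      simp [hσ, Nat.ne_of_lt hi]
    | algebraMap r => simp
    | add x y _ _ hx hy => rw [map_add, hx, hy]
    | mul x y _ _ hx hy => rw [map_mul, hx, hy]
  rw [hrec k, map_add, map_mul, map_mul, PowerSeries.constantCoeff_C, hc0, one_mul,
    map_add, map_mul]
  have h1 : MvPolynomial.aeval σ (MvPolynomial.X k : MvPolynomial ℕ ℚ) = 0 := by
    simp [hσ]
  rw [h1, zero_mul, add_zero]
  exact hfix _ (by simpa using hCk k 0)
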